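/- Let a, b, c > 0 with a + b + c < 2π, let κ ∈ ℝ, let ε > 0, and set η = (sin(a/2)·sin(c/2))/(sin((a+b)/2)·sin((b+c)/2)). Define S(ℓ) = κ·ln(2·sin(ℓ/2)/ε) for 0 < ℓ < 2π. Then 0 < η < 1 and S(a+b) + S(b+c) − η·(S(a) + S(c)) − (1−η)·(S(b) + S(a+b+c)) = κ·h(η), where h(η) = −η·ln(η) − (1−η)·ln(1−η). -/
import Mathlib


open Real

/-- The circle version of the vector fixed-point constant: for arc lengths `a, b, c` with
`a + b + c < 2π`, chordal cross-ratio `η = sin(a/2)sin(c/2)/(sin((a+b)/2)sin((b+c)/2))` and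
entanglement entropy `S(ℓ) = κ ln(2 sin(ℓ/2)/ε)` for `0 < ℓ < 2π`, one has `0 < η < 1` and
`S(a+b) + S(b+c) - η(S(a)+S(c)) - (1-η)(S(b)+S(a+b+c)) = κ h(η)`,
where `h` is the binary entropy function. -/
theorem stmt_14 (a b c κ ε : ℝ) (ha : 0 < a) (hb : 0 < b) (hc : 0 < c)
    (habc : a + b + c < 2 * π) (hε : 0 < ε)
    (η : ℝ)
    (hη : η = (Real.sin (a / 2) * Real.sin (c / 2)) /
      (Real.sin ((a + b) / 2) * Real.sin ((b + c) / 2)))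
    (S : ℝ → ℝ) (hS : ∀ ℓ : ℝ, 0 < ℓ → ℓ < 2 * π → S ℓ = κ * Real.log (2 * Real.sin (ℓ / 2) / ε)) :
    0 < η ∧ η < 1 ∧
    S (a + b) + S (b + c) - η * (S a + S c) - (1 - η) * (S b + S (a + b + c))
      = κ * (-η * Real.log η - (1 - η) * Real.log (1 - η)) := by
  have hπ := Real.pi_pos
  have sinpos : ∀ x : ℝ, 0 < x → x < 2 * π → 0 < Real.sin (x / 2) := by
    intro x hx hx2
    apply Real.sin_pos_of_pos_of_lt_pi <;> linarith
  have hsa := sinpos a ha (by linarith)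
  have hsb := sinpos b hb (by linarith)
  have hsc := sinpos c hc (by linarith)
  have hsab := sinpos (a + b) (by linarith) (by linarith)
  have hsbc := sinpos (b + c) (by linarith) (by linarith)
  have hsabc := sinpos (a + b + c) (by linarith) habc
  have hD : 0 < Real.sin ((a + b) / 2) * Real.sin ((b + c) / 2) := mul_pos hsab hsbc
  have key : Real.sin ((a + b) / 2) * Real.sin ((b + c) / 2)
      = Real.sin (a / 2) * Real.sin (c / 2)
        + Real.sin (b / 2) * Real.sin ((a + b + c) / 2) := by
    have e1 : (a + b) / 2 = a / 2 + b / 2 := by ring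
    have e2 : (b + c) / 2 = b / 2 + c / 2 := by ring
    have e3 : (a + b + c) / 2 = a / 2 + b / 2 + c / 2 := by ring
    rw [e1, e2, e3, Real.sin_add, Real.sin_add, Real.sin_add (a / 2 + b / 2),
      Real.sin_add, Real.cos_add]
    linear_combination Real.sin (a / 2) * Real.sin (c / 2) * Real.sin_sq_add_cos_sq (b / 2)
  have hηpos : 0 < η := by
    rw [hη]; exact div_pos (mul_pos hsa hsc) hD
  have hηlt : η < 1 := by
    rw [hη]
    rw [div_lt_one hD]
    nlinarith [mul_pos hsb hsabc]
  have h1m : 1 - η = (Real.sin (b / 2) * Real.sin ((a + b + c) / 2)) /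
      (Real.sin ((a + b) / 2) * Real.sin ((b + c) / 2)) := by
    rw [hη]
    field_simp
    linear_combination key
  have hlogη : Real.log η =
      Real.log (Real.sin (a / 2)) + Real.log (Real.sin (c / 2))
      - (Real.log (Real.sin ((a + b) / 2)) + Real.log (Real.sin ((b + c) / 2))) := by
    rw [hη, Real.log_div (by positivity) (by positivity),
      Real.log_mul hsa.ne' hsc.ne', Real.log_mul hsab.ne' hsbc.ne']
  have hlog1m : Real.log (1 - η) =
      Real.log (Real.sin (b / 2)) + Real.log (Real.sin ((a + b + c) / 2))
      - (Real.log (Real.sin ((a + b) / 2)) + Real.log (Real.sin ((b + c) / 2))) := by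
    rw [h1m, Real.log_div (by positivity) (by positivity),
      Real.log_mul hsb.ne' hsabc.ne', Real.log_mul hsab.ne' hsbc.ne']
  have L : ∀ x : ℝ, 0 < x → Real.log (2 * x / ε) = Real.log 2 + Real.log x - Real.log ε := by
    intro x hx
    rw [Real.log_div (by positivity) hε.ne', Real.log_mul two_ne_zero hx.ne']
  refine ⟨hηpos, hηlt, ?_⟩
  rw [hS (a + b) (by linarith) (by linarith), hS (b + c) (by linarith) (by linarith),
    hS a ha (by linarith), hS c hc (by linarith), hS b hb (by linarith),
    hS (a + b + c) (by linarith) habc,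
    L _ hsab, L _ hsbc, L _ hsa, L _ hsc, L _ hsb, L _ hsabc]
  linear_combination (κ * η) * hlogη + (κ * (1 - η)) * hlog1m
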